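/- For x ≥ 0, the Gaussian Mill's ratio satisfies Φ̄(x)/φ(x) ≤ 2/(√(2+x²) + x). -/

import Mathlib

open Real MeasureTheory Set Filter


/-- The standard normal density `φ`. -/
noncomputable def stdPdf (x : ℝ) : ℝ :=
  (Real.sqrt (2 * Real.pi))⁻¹ * Real.exp (-x ^ 2 / 2)

/-- The standard normal tail probability `Φ̄(x) = ∫_x^∞ φ`. -/
noncomputable def stdTail (x : ℝ) : ℝ := ∫ t in Set.Ioi x, stdPdf t

lemma stdPdf_pos (x : ℝ) : 0 < stdPdf x := by
  unfold stdPdf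
  positivity

lemma integrable_stdPdf : Integrable stdPdf := by
  have : Integrable (fun x : ℝ => Real.exp (-(1/2) * x ^ 2)) := integrable_exp_neg_mul_sq (by norm_num)
  have h2 := this.const_mul (Real.sqrt (2 * Real.pi))⁻¹
  refine h2.congr ?_
  filter_upwards with x
  unfold stdPdf
  ring_nf

lemma continuous_stdPdf : Continuous stdPdf := by
  unfold stdPdf; fun_prop

lemma stdTail_sub {a b : ℝ} (hab : a ≤ b) :
    stdTail a = (∫ t in Set.Ioc a b, stdPdf t) + stdTail b := by
  unfold stdTail
  rw [← MeasureTheory.setIntegral_union (Set.Ioc_disjoint_Ioi le_rfl) measurableSet_Ioi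
    integrable_stdPdf.integrableOn integrable_stdPdf.integrableOn,
    Set.Ioc_union_Ioi_eq_Ioi hab]

lemma stdTail_eq (x : ℝ) : stdTail x = stdTail 0 - ∫ t in (0:ℝ)..x, stdPdf t := by
  rcases le_total 0 x with h | h
  · rw [intervalIntegral.integral_of_le h]
    have := stdTail_sub h
    linarith
  · rw [intervalIntegral.integral_of_ge h]
    have := stdTail_sub h
    linarith

lemma hasDerivAt_stdTail (x : ℝ) : HasDerivAt stdTail (-stdPdf x) x := by
  have h : HasDerivAt (fun y => ∫ t in (0:ℝ)..y, stdPdf t) (stdPdf x) x :=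
    intervalIntegral.integral_hasDerivAt_right integrable_stdPdf.intervalIntegrable
      (continuous_stdPdf.stronglyMeasurableAtFilter _ _) continuous_stdPdf.continuousAt
  have h2 := (hasDerivAt_const x (stdTail 0)).sub h
  have he : stdTail = fun y => stdTail 0 - ∫ t in (0:ℝ)..y, stdPdf t := funext stdTail_eq
  rw [he]
  exact h2.congr_deriv (by ring)

lemma tendsto_stdTail : Tendsto stdTail atTop (nhds 0) := by
  have h := intervalIntegral_tendsto_integral_Ioi 0 integrable_stdPdf.integrableOn (tendsto_id (α := ℝ))
  have : Tendsto (fun x => stdTail 0 - ∫ t in (0:ℝ)..x, stdPdf t) atTop (nhds (stdTail 0 - stdTail 0)) :=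
    tendsto_const_nhds.sub h
  rw [sub_self] at this
  exact this.congr fun x => (stdTail_eq x).symm


lemma hasDerivAt_stdPdf (x : ℝ) : HasDerivAt stdPdf (-x * stdPdf x) x := by
  have h1 : HasDerivAt (fun y : ℝ => -y ^ 2 / 2) (-x) x := by
    have : HasDerivAt (fun y : ℝ => y ^ 2) (2 * x) x := by
      simpa using (hasDerivAt_pow 2 x)
    have h2 := (this.neg).div_const 2
    exact h2.congr_deriv (by ring)
  have h2 := (Real.hasDerivAt_exp (-x ^ 2 / 2)).comp x h1
  have h3 := h2.const_mul (Real.sqrt (2 * Real.pi))⁻¹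
  unfold stdPdf
  exact h3.congr_deriv (by ring)

lemma denom_pos (y : ℝ) : 0 < Real.sqrt (2 + y ^ 2) + y := by
  have hs := Real.sq_sqrt (show (0:ℝ) ≤ 2 + y ^ 2 by positivity)
  nlinarith [Real.sqrt_nonneg (2 + y ^ 2), sq_nonneg (Real.sqrt (2 + y ^ 2) + y)]

noncomputable def millH (y : ℝ) : ℝ :=
  2 * stdPdf y / (Real.sqrt (2 + y ^ 2) + y) - stdTail y

noncomputable def millHd (y : ℝ) : ℝ :=
  (2 * (-y * stdPdf y) * (Real.sqrt (2 + y ^ 2) + y) -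
    2 * stdPdf y * (y / Real.sqrt (2 + y ^ 2) + 1)) / (Real.sqrt (2 + y ^ 2) + y) ^ 2
    + stdPdf y

lemma sqrt_pos' (y : ℝ) : 0 < Real.sqrt (2 + y ^ 2) :=
  Real.sqrt_pos.2 (by positivity)

lemma hasDerivAt_millH (y : ℝ) : HasDerivAt millH (millHd y) y := by
  have hs0 := sqrt_pos' y
  have hsq : HasDerivAt (fun z : ℝ => Real.sqrt (2 + z ^ 2))
      (y / Real.sqrt (2 + y ^ 2)) y := by
    have h1 : HasDerivAt (fun z : ℝ => 2 + z ^ 2) (2 * y) y := by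
      simpa using (hasDerivAt_pow 2 y).const_add 2
    have h2 := (Real.hasDerivAt_sqrt (show (2 : ℝ) + y ^ 2 ≠ 0 by positivity)).comp y h1
    exact h2.congr_deriv (by field_simp)
  have hden : HasDerivAt (fun z : ℝ => Real.sqrt (2 + z ^ 2) + z)
      (y / Real.sqrt (2 + y ^ 2) + 1) y := hsq.add (hasDerivAt_id y)
  have hnum : HasDerivAt (fun z : ℝ => 2 * stdPdf z) (2 * (-y * stdPdf y)) y :=
    (hasDerivAt_stdPdf y).const_mul 2
  have hq := hnum.div hden (denom_pos y).ne'
  have := hq.sub (hasDerivAt_stdTail y)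
  unfold millH millHd
  exact this.congr_deriv (by ring)

lemma millHd_nonpos {y : ℝ} (hy : 0 ≤ y) : millHd y ≤ 0 := by
  set s := Real.sqrt (2 + y ^ 2) with hsdef
  have hs0 := sqrt_pos' y
  have hs2 : s ^ 2 = 2 + y ^ 2 := Real.sq_sqrt (by positivity)
  have hd := denom_pos y
  have hφ := stdPdf_pos y
  have hys : y ≤ s := by nlinarith
  set φ := stdPdf y
  have heq : millHd y =
      (2 * (-y * φ) * (s + y) * s - 2 * φ * (y + s) + φ * (s + y) ^ 2 * s)
        / (s * (s + y) ^ 2) := by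
    unfold millHd
    rw [← hsdef]
    simp only [φ]
    have hs0' : s ≠ 0 := hs0.ne'
    have hd' : s + y ≠ 0 := hd.ne'
    field_simp
  rw [heq]
  apply div_nonpos_of_nonpos_of_nonneg _ (by positivity)
  have hid : 2 * (-y * φ) * (s + y) * s - 2 * φ * (y + s) + φ * (s + y) ^ 2 * s
      = -(φ * (s + y) * y * (s - y)) := by linear_combination (φ * (s + y)) * hs2
  rw [hid, neg_nonpos]
  exact mul_nonneg (mul_nonneg (mul_nonneg hφ.le hd.le) hy) (sub_nonneg.2 hys)

lemma tendsto_stdPdf : Filter.Tendsto stdPdf atTop (nhds 0) := by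
  have h1 : Filter.Tendsto (fun y : ℝ => -y ^ 2 / 2) atTop atBot := by
    apply Filter.Tendsto.atBot_div_const (by norm_num)
    exact tendsto_neg_atTop_atBot.comp (tendsto_pow_atTop two_ne_zero)
  have h2 := Real.tendsto_exp_atBot.comp h1
  have h3 := h2.const_mul (Real.sqrt (2 * Real.pi))⁻¹
  unfold stdPdf
  simpa only [stdPdf, Function.comp_apply, mul_zero] using h3

lemma tendsto_millH : Filter.Tendsto millH atTop (nhds 0) := by
  have hg : Filter.Tendsto (fun y => 2 * stdPdf y / (Real.sqrt (2 + y ^ 2) + y))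
      atTop (nhds 0) := by
    have hub : Filter.Tendsto (fun y => 2 * stdPdf y) atTop (nhds 0) := by
      simpa using tendsto_stdPdf.const_mul 2
    apply tendsto_of_tendsto_of_tendsto_of_le_of_le' tendsto_const_nhds hub
    · filter_upwards with y
      exact div_nonneg (by linarith [stdPdf_pos y]) (denom_pos y).le
    · filter_upwards [Filter.eventually_ge_atTop (0:ℝ)] with y hy
      have hd := denom_pos y
      have h1 : (1:ℝ) ≤ Real.sqrt (2 + y ^ 2) + y := by
        have : (1:ℝ) ≤ Real.sqrt (2 + y ^ 2) := by
          rw [show (1:ℝ) = Real.sqrt 1 by simp]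
          exact Real.sqrt_le_sqrt (by nlinarith)
        linarith
      calc 2 * stdPdf y / (Real.sqrt (2 + y ^ 2) + y) ≤ 2 * stdPdf y / 1 := by
            exact div_le_div_of_nonneg_left (by linarith [stdPdf_pos y]) one_pos h1
        _ = 2 * stdPdf y := by ring
  have := hg.sub tendsto_stdTail
  unfold millH
  simpa [millH] using this

lemma millH_nonneg {x : ℝ} (hx : 0 ≤ x) : 0 ≤ millH x := by
  have hdiff : ∀ y, DifferentiableAt ℝ millH y := fun y =>
    (hasDerivAt_millH y).differentiableAt
  have hanti : AntitoneOn millH (Set.Ici x) := by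
    apply antitoneOn_of_deriv_nonpos (convex_Ici x)
    · exact (Differentiable.continuous fun y => hdiff y).continuousOn
    · exact fun y _ => (hdiff y).differentiableWithinAt
    · intro y hy
      rw [interior_Ici] at hy
      rw [(hasDerivAt_millH y).deriv]
      exact millHd_nonpos (le_of_lt (lt_of_le_of_lt hx hy))
  refine le_of_tendsto tendsto_millH ?_
  filter_upwards [Filter.eventually_ge_atTop x] with y hy
  exact hanti Set.self_mem_Ici hy hy

/-- Mill's ratio bound: for `x ≥ 0`, `Φ̄(x)/φ(x) ≤ 2/(√(2+x²) + x)`. -/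
theorem stmt_10 (x : ℝ) (hx : 0 ≤ x) :
    stdTail x / stdPdf x ≤ 2 / (Real.sqrt (2 + x ^ 2) + x) := by
  have h := millH_nonneg hx
  unfold millH at h
  have hφ := stdPdf_pos x
  have hd := denom_pos x
  rw [div_le_div_iff₀ hφ hd]
  have h2 : stdTail x * (Real.sqrt (2 + x ^ 2) + x)
      ≤ 2 * stdPdf x / (Real.sqrt (2 + x ^ 2) + x) * (Real.sqrt (2 + x ^ 2) + x) :=
    mul_le_mul_of_nonneg_right (by linarith) hd.le
  rw [div_mul_cancel₀ _ hd.ne'] at h2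
  linarith
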